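/- For $f$ in the cone $\mathcal{C}$ with $\|f\|_{\mathcal{F}} \le \rho$, for every $j \ge 1$: $\rho^2 \ge \sigma_j(f)^2 \left[ \sum_{k=1}^{j-1} \frac{b^{2(k-j)}}{a^2 \lambda_{n_{k-1}+1}^2} + \frac{1}{\lambda_{n_{j-1}+1}^2} \right]$. -/

import Mathlib

open scoped RealInnerProductSpace

/-- `σ_j(f)`: 0-based indexing, with the `j`-th block of coefficients `n_{j-1} ≤ i < n_j`. -/
noncomputable def sig {F : Type*} [NormedAddCommGroup F] [InnerProductSpace ℝ F]
    (u : HilbertBasis ℕ ℝ F) (lam : ℕ → ℝ) (n : ℕ → ℕ) (j : ℕ) (f : F) : ℝ :=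
  Real.sqrt (∑ i ∈ Finset.Ico (n (j - 1)) (n j), (lam i * ⟪f, u i⟫) ^ 2)

/-- For `f` in the cone `C` with `‖f‖ ≤ ρ` and every `j ≥ 1`,
`ρ² ≥ σ_j(f)² [ ∑_{k=1}^{j-1} b^{2(k-j)}/(a² λ_{n_{k-1}+1}²) + 1/λ_{n_{j-1}+1}² ]`
(0-based indexing: `lam (n (k-1))` is `λ_{n_{k-1}+1}`). -/
theorem stmt_14 {F : Type*} [NormedAddCommGroup F] [InnerProductSpace ℝ F] [CompleteSpace F]
    (u : HilbertBasis ℕ ℝ F)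
    (lam : ℕ → ℝ) (hpos : ∀ i, 0 < lam i) (hanti : Antitone lam)
    (n : ℕ → ℕ) (hn0 : n 0 = 0) (hn : StrictMono n)
    (a b : ℝ) (ha : 1 < a) (hb0 : 0 < b) (hb1 : b < 1)
    (f : F)
    (hf : ∀ j r : ℕ, 1 ≤ j → 1 ≤ r → sig u lam n (j + r) f ≤ a * b ^ r * sig u lam n j f)
    (ρ : ℝ) (hρ : ‖f‖ ≤ ρ)
    (j : ℕ) (hj : 1 ≤ j) :
    sig u lam n j f ^ 2 *
        (∑ k ∈ Finset.Ico 1 j, b ^ (2 * ((k : ℤ) - (j : ℤ))) / (a ^ 2 * lam (n (k - 1)) ^ 2) +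
          1 / lam (n (j - 1)) ^ 2) ≤ ρ ^ 2 := by
  have ha0 : (0:ℝ) < a := lt_trans one_pos ha
  set S : ℕ → ℝ := fun k => ∑ i ∈ Finset.Ico (n (k-1)) (n k), ⟪f, u i⟫ ^ 2 with hS
  have hS0 : ∀ k, 0 ≤ S k := fun k => Finset.sum_nonneg fun i _ => sq_nonneg _
  have hsig_sq : ∀ k, sig u lam n k f ^ 2 =
      ∑ i ∈ Finset.Ico (n (k-1)) (n k), (lam i * ⟪f, u i⟫)^2 := fun k =>
    Real.sq_sqrt (Finset.sum_nonneg fun i _ => sq_nonneg _)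
  -- Parseval
  have hsum : HasSum (fun i => (⟪f, u i⟫ : ℝ) ^ 2) (‖f‖^2) := by
    have h := u.hasSum_inner_mul_inner f f
    have heq : (fun i => (⟪f, u i⟫ : ℝ) * ⟪u i, f⟫) = fun i => (⟪f, u i⟫ : ℝ) ^ 2 := by
      funext i; rw [real_inner_comm (u i) f, sq]
    rw [heq, real_inner_self_eq_norm_sq] at h
    exact h
  have hnorm : ∑ i ∈ Finset.range (n j), (⟪f, u i⟫ : ℝ)^2 ≤ ρ^2 := by
    calc ∑ i ∈ Finset.range (n j), (⟪f, u i⟫ : ℝ)^2 ≤ ‖f‖^2 :=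
          sum_le_hasSum _ (fun i _ => sq_nonneg _) hsum
      _ ≤ ρ^2 := pow_le_pow_left₀ (norm_nonneg f) hρ 2
  -- block decomposition
  have hdec : ∀ m, ∑ k ∈ Finset.Ico 1 (m+1), S k
      = ∑ i ∈ Finset.range (n m), (⟪f, u i⟫ : ℝ)^2 := by
    intro m
    induction m with
    | zero => simp [hn0]
    | succ m ih =>
      rw [Finset.sum_Ico_succ_top (by omega), ih, Finset.range_eq_Ico, Finset.range_eq_Ico,
        ← Finset.sum_Ico_consecutive _ (Nat.zero_le (n m)) (hn (Nat.lt_succ_self m)).le]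
      simp [hS]
  -- per-block coefficient bound
  have h2 : ∀ k, 1 ≤ k → sig u lam n k f ^ 2 ≤ S k * lam (n (k-1)) ^ 2 := by
    intro k hk1
    rw [hsig_sq, hS, Finset.sum_mul]
    apply Finset.sum_le_sum
    intro i hi
    have hi1 : n (k-1) ≤ i := (Finset.mem_Ico.mp hi).1
    have hlami : lam i ≤ lam (n (k-1)) := hanti hi1
    have hsq : lam i ^2 ≤ lam (n (k-1))^2 := pow_le_pow_left₀ (hpos i).le hlami 2
    rw [mul_pow]
    nlinarith [sq_nonneg (⟪f, u i⟫ : ℝ)]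
  have key : ∀ k ∈ Finset.Ico 1 j,
      sig u lam n j f ^ 2 * (b ^ (2 * ((k : ℤ) - (j : ℤ))) / (a ^ 2 * lam (n (k - 1)) ^ 2))
        ≤ S k := by
    intro k hk
    obtain ⟨hk1, hkj⟩ := Finset.mem_Ico.mp hk
    set r := j - k with hrdef
    have hr : 1 ≤ r := by omega
    have hjk : j = k + r := by omega
    have hcone := hf k r hk1 hr
    rw [← hjk] at hcone
    have h1 : sig u lam n j f ^ 2 ≤ (a * b ^ r)^2 * sig u lam n k f ^ 2 := by
      rw [← mul_pow]
      exact pow_le_pow_left₀ (Real.sqrt_nonneg _) hcone 2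
    have hlam := hpos (n (k-1))
    have hz : (b : ℝ) ^ (2 * ((k : ℤ) - (j : ℤ))) = (b ^ (2*r))⁻¹ := by
      have he : 2 * ((k:ℤ) - (j:ℤ)) = -((2*r : ℕ) : ℤ) := by push_cast; omega
      rw [he, zpow_neg, zpow_natCast]
    rw [hz]
    calc sig u lam n j f ^ 2 * ((b ^ (2*r))⁻¹ / (a^2 * lam (n (k-1))^2))
        ≤ ((a * b ^ r)^2 * (S k * lam (n (k-1))^2)) * ((b ^ (2*r))⁻¹ / (a^2 * lam (n (k-1))^2)) := by
          apply mul_le_mul_of_nonneg_right _ (by positivity)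
          calc sig u lam n j f ^ 2 ≤ (a * b ^ r)^2 * sig u lam n k f ^ 2 := h1
            _ ≤ (a * b ^ r)^2 * (S k * lam (n (k-1))^2) := by
                exact mul_le_mul_of_nonneg_left (h2 k hk1) (by positivity)
      _ = S k := by
          field_simp
          ring
  have hlast : sig u lam n j f ^ 2 * (1 / lam (n (j-1)) ^ 2) ≤ S j := by
    have := h2 j hj
    have hlam := hpos (n (j-1))
    rw [mul_one_div, div_le_iff₀ (by positivity)]
    linarith
  calc sig u lam n j f ^ 2 *
        (∑ k ∈ Finset.Ico 1 j, b ^ (2 * ((k : ℤ) - (j : ℤ))) / (a ^ 2 * lam (n (k - 1)) ^ 2) +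
          1 / lam (n (j - 1)) ^ 2)
      = ∑ k ∈ Finset.Ico 1 j,
          sig u lam n j f ^ 2 * (b ^ (2 * ((k : ℤ) - (j : ℤ))) / (a ^ 2 * lam (n (k - 1)) ^ 2))
        + sig u lam n j f ^ 2 * (1 / lam (n (j - 1)) ^ 2) := by
        rw [mul_add, Finset.mul_sum]
    _ ≤ ∑ k ∈ Finset.Ico 1 j, S k + S j := add_le_add (Finset.sum_le_sum key) hlast
    _ = ∑ k ∈ Finset.Ico 1 (j+1), S k := (Finset.sum_Ico_succ_top hj _).symm
    _ = ∑ i ∈ Finset.range (n j), (⟪f, u i⟫ : ℝ)^2 := hdec j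
    _ ≤ ρ^2 := hnorm
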